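/- Suppose P is irreducible, aperiodic, and reversible with respect to π. Let E ⊆ Ē, w : E → (0,∞), and let φ : Γ_E → [0,∞) satisfy Σ_{γ∈Γ_E(x,x')} φ(γ) = π(x)·π(x') for all x ≠ x'. Then Gap(P) ≥ 1/A(E,w,φ), where Gap(P) denotes the variational quantity inf{ E(f)/Var_π(f) : Var_π(f) ≠ 0 } (equal to one minus the second-largest eigenvalue of P). -/

import Mathlib

open Finset

noncomputable section

variable {X : Type*}

/-- Total variation distance between two (finitely supported) distributions. -/
def tvDist [Fintype X] (ζ μ : X → ℝ) : ℝ :=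
  ⨆ A : Finset X, |∑ a ∈ A, ζ a - ∑ a ∈ A, μ a|

/-- The lazy version `(P + I)/2` of a transition matrix. -/
def lazyM [Fintype X] [DecidableEq X] (P : Matrix X X ℝ) : Matrix X X ℝ :=
  (2 : ℝ)⁻¹ • (P + 1)

/-- Mixing time started from `x`. -/
def mixTimeFrom [Fintype X] [DecidableEq X] (P : Matrix X X ℝ) (μ : X → ℝ) (ε : ℝ) (x : X) : ℕ :=
  sInf {t : ℕ | tvDist (fun y => (P ^ t) x y) μ ≤ ε}

/-- Worst-case mixing time. -/
def mixTime [Fintype X] [DecidableEq X] (P : Matrix X X ℝ) (μ : X → ℝ) (ε : ℝ) : ℕ :=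
  Finset.univ.sup (mixTimeFrom P μ ε)

/-- Variational spectral gap of a reversible transition matrix. -/
def specGap [Fintype X] (P : Matrix X X ℝ) (μ : X → ℝ) : ℝ :=
  sInf { r : ℝ | ∃ f : X → ℝ,
    (2⁻¹ * ∑ x, ∑ y, (f x - f y) ^ 2 * μ x * μ y) ≠ 0 ∧
    r = (2⁻¹ * ∑ x, ∑ y, (f x - f y) ^ 2 * P x y * μ x) /
        (2⁻¹ * ∑ x, ∑ y, (f x - f y) ^ 2 * μ x * μ y) }

/-- Restricted spectral gap on `X0`. -/
def restGap [Fintype X] (P : Matrix X X ℝ) (μ : X → ℝ) (X0 : Finset X) : ℝ :=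
  sInf { r : ℝ | ∃ f : X → ℝ,
    0 < (∑ x ∈ X0, ∑ y ∈ X0, (f x - f y) ^ 2 * μ x * μ y) ∧
    r = (∑ x ∈ X0, ∑ y ∈ X0, (f x - f y) ^ 2 * P x y * μ x) /
        (∑ x ∈ X0, ∑ y ∈ X0, (f x - f y) ^ 2 * μ x * μ y) }

/-- `c(ρ) = 4 / (1 - ρ^{-1/2})³`. -/
def cFun (ρ : ℝ) : ℝ := 4 / (1 - ρ ^ (-(2 : ℝ)⁻¹)) ^ 3

/-- Maximum neighborhood size. -/
def Mmax [Fintype X] (N : X → Finset X) : ℕ := Finset.univ.sup fun x => (N x).card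

/-- Minimal value of `π`. -/
def piMin [Fintype X] [Nonempty X] (π : X → ℝ) : ℝ := ⨅ x, π x

/-- `R = min_{x ≠ x*} max_{y ∈ N(x)} π(y)/π(x)`. -/
def Rval [Fintype X] (π : X → ℝ) (N : X → Finset X) (xstar : X) : ℝ :=
  sInf ((fun x => sSup ((fun y => π y / π x) '' (N x : Set X))) '' {x | x ≠ xstar})

/-- Restricted `R|_{X₀}`. -/
def RvalRes [Fintype X] [DecidableEq X] (π : X → ℝ) (N : X → Finset X) (X0 : Finset X)
    (x0star : X) : ℝ :=
  sInf ((fun x => sSup ((fun y => π y / π x) '' ((N x ∩ X0 : Finset X) : Set X))) ''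
    {x | x ∈ X0 ∧ x ≠ x0star})

/-- Random walk Metropolis–Hastings transition matrix. -/
def rwMH [Fintype X] [DecidableEq X] (π : X → ℝ) (N : X → Finset X) : Matrix X X ℝ :=
  Matrix.of fun x y =>
    if y ∈ N x then min (((N x).card : ℝ))⁻¹ (π y / (π x * ((N y).card : ℝ)))
    else if y = x then
      1 - ∑ z ∈ N x, min (((N x).card : ℝ))⁻¹ (π z / (π x * ((N z).card : ℝ)))
    else 0

/-- The clipping function `clip(u, ℓ, L)`. -/
def clip (l L u : ℝ) : ℝ := if u < l then l else if u ≤ L then u else L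

/-- Normalizing constant of the informed proposal. -/
def Zh [Fintype X] (π : X → ℝ) (N : X → Finset X) (l L : ℝ) (x : X) : ℝ :=
  ∑ y ∈ N x, clip l L (π y / π x)

/-- Informed proposal kernel. -/
def Kh [Fintype X] [DecidableEq X] (π : X → ℝ) (N : X → Finset X) (l L : ℝ) (x y : X) : ℝ :=
  (if y ∈ N x then clip l L (π y / π x) else 0) / Zh π N l L x

/-- Informed Metropolis–Hastings transition matrix. -/
def infMH [Fintype X] [DecidableEq X] (π : X → ℝ) (N : X → Finset X) (l L : ℝ) :
    Matrix X X ℝ :=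
  Matrix.of fun x y =>
    if y = x then
      1 - ∑ z ∈ Finset.univ.erase x,
        Kh π N l L x z * min 1 ((π z * Kh π N l L z x) / (π x * Kh π N l L x z))
    else Kh π N l L x y * min 1 ((π y * Kh π N l L y x) / (π x * Kh π N l L x y))

/-- List of consecutive edges of a list of vertices. -/
def edgeList : List X → List (X × X)
  | a :: b :: rest => (a, b) :: edgeList (b :: rest)
  | _ => []

/-- `γ` is a path from `x` to `y` (x ≠ y) with all edges in `E` and no repeated edge. -/
def IsPathIn (E : Finset (X × X)) (x y : X) (γ : List X) : Prop :=
  x ≠ y ∧ γ.head? = some x ∧ γ.getLast? = some y ∧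
    (∀ e ∈ edgeList γ, e ∈ E) ∧ (edgeList γ).Nodup

/-- `Φ(x,y) = Σ_{γ ∈ Γ_E(x,y)} φ(γ)`. -/
def flowBetween (E : Finset (X × X)) (φ : List X → ℝ) (x y : X) : ℝ :=
  ∑' γ : {γ : List X // IsPathIn E x y γ}, φ γ

/-- Flow from `x` to `y` through the edge `e`. -/
def flowBetweenThrough (E : Finset (X × X)) (φ : List X → ℝ) (x y : X) (e : X × X) : ℝ :=
  ∑' γ : {γ : List X // IsPathIn E x y γ ∧ e ∈ edgeList γ}, φ γ

/-- `w`-length of a path. -/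
def wlen (w : X × X → ℝ) (γ : List X) : ℝ := ((edgeList γ).map w).sum

/-- Congestion `A(E, w, φ)`. -/
def congestion [Fintype X] (π : X → ℝ) (P : Matrix X X ℝ) (E : Finset (X × X))
    (w : X × X → ℝ) (φ : List X → ℝ) : ℝ :=
  ⨆ e ∈ E,
    (∑' γ : {γ : List X // (∃ x y, IsPathIn E x y γ) ∧ e ∈ edgeList γ}, wlen w γ * φ γ) /
      (π e.1 * P e.1 e.2 * w e)

/-- `N_S(x) = {x' ∈ N(x) : π(x')/π(x) ≥ S}`. -/
def NS [Fintype X] (π : X → ℝ) (N : X → Finset X) (S : ℝ) (x : X) : Finset X :=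
  (N x).filter fun y => S ≤ π y / π x

/-- Edge set `E_S`. -/
def ES [Fintype X] [DecidableEq X] (π : X → ℝ) (N : X → Finset X) (S : ℝ) : Finset (X × X) :=
  Finset.univ.filter fun e => e.1 ∈ NS π N S e.2 ∨ e.2 ∈ NS π N S e.1

/-- Restricted `N|^S_{X₀}(x)`. -/
def NSres [Fintype X] [DecidableEq X] (π : X → ℝ) (N : X → Finset X) (X0 : Finset X) (S : ℝ)
    (x : X) : Finset X :=
  ((N x) ∩ X0).filter fun y => S ≤ π y / π x

/-- Restricted edge set `E_S⁰`. -/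
def ESres [Fintype X] [DecidableEq X] (π : X → ℝ) (N : X → Finset X) (X0 : Finset X)
    (S : ℝ) : Finset (X × X) :=
  Finset.univ.filter fun e =>
    (e.1 ∈ X0 ∧ e.2 ∈ X0) ∧ (e.1 ∈ NSres π N X0 S e.2 ∨ e.2 ∈ NSres π N X0 S e.1)

end


section auxstmt9
open Finset
variable {X : Type*}

lemma edgeList_cons' (a b : X) (r : List X) :
    edgeList (a :: b :: r) = (a, b) :: edgeList (b :: r) := rfl

lemma telescope_aux (f : X → ℝ) : ∀ (γ : List X) (a b : X), γ.head? = some a →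
    γ.getLast? = some b → ((edgeList γ).map (fun e => f e.1 - f e.2)).sum = f a - f b
  | [], a, b => by simp
  | [c], a, b => by
      intro h1 h2
      simp only [List.head?_cons, Option.some.injEq] at h1
      simp only [List.getLast?_singleton, Option.some.injEq] at h2
      subst h1; subst h2; simp [edgeList]
  | c :: d :: r, a, b => by
      intro h1 h2
      simp only [List.head?_cons, Option.some.injEq] at h1
      subst h1
      rw [edgeList_cons', List.map_cons, List.sum_cons,
        telescope_aux f (d :: r) d b rfl (by rw [← h2, List.getLast?_cons_cons])]
      ring

lemma path_two_le {E : Finset (X × X)} {x y : X} {γ : List X} (h : IsPathIn E x y γ) :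
    2 ≤ γ.length := by
  obtain ⟨hxy, h1, h2, -, -⟩ := h
  match γ with
  | [] => simp at h1
  | [c] =>
      simp only [List.head?_cons, Option.some.injEq] at h1
      simp only [List.getLast?_singleton, Option.some.injEq] at h2
      exact absurd (h1.symm.trans h2) hxy
  | a :: b :: r => simp

lemma edgeList_inj : ∀ (γ γ' : List X), 2 ≤ γ.length → 2 ≤ γ'.length →
    edgeList γ = edgeList γ' → γ = γ'
  | a :: b :: r, a' :: b' :: r', _, _, h => by
      rw [edgeList_cons', edgeList_cons'] at h
      obtain ⟨h1, h2⟩ := List.cons.injEq .. ▸ h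
      obtain ⟨rfl, rfl⟩ := Prod.mk.injEq .. ▸ h1
      match r, r' with
      | [], [] => rfl
      | [], c :: s => exact absurd h2 (by simp [edgeList])
      | c :: s, [] => exact absurd h2 (by simp [edgeList])
      | c :: s, c' :: s' =>
          have := edgeList_inj (b :: c :: s) (b :: c' :: s') (by simp) (by simp) h2
          rw [List.cons.injEq] at this
          rw [this.2]
  | [], γ', h, _, _ => by simp at h
  | [c], γ', h, _, _ => by simp at h
  | γ, [], _, h, _ => by simp at h
  | γ, [c], _, h, _ => by simp at h

lemma paths_finite [Fintype X] (E : Finset (X × X)) :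
    {γ : List X | ∃ x y, IsPathIn E x y γ}.Finite := by
  classical
  apply Set.Finite.of_finite_image (f := edgeList)
  · apply Set.Finite.subset (List.finite_length_le (X × X) (Fintype.card (X × X)))
    rintro l ⟨γ, ⟨x, y, hγ⟩, rfl⟩
    exact hγ.2.2.2.2.length_le_card
  · rintro γ ⟨x, y, hγ⟩ γ' ⟨x', y', hγ'⟩ h
    exact edgeList_inj γ γ' (path_two_le hγ) (path_two_le hγ') h

lemma tsum_of_finite {α : Type*} {p : α → Prop} (h : {x | p x}.Finite) (f : α → ℝ) :
    ∑' x : {x // p x}, f x = ∑ x ∈ h.toFinset, f x := by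
  have : Fintype {x // p x} := h.fintype
  rw [tsum_fintype]
  exact (Finset.sum_subtype h.toFinset (by simp) f).symm

lemma list_CS [DecidableEq X] {E : Finset (X × X)} {w : X × X → ℝ}
    (hw : ∀ e ∈ E, 0 < w e) {x y : X} {γ : List X} (h : IsPathIn E x y γ) (f : X → ℝ) :
    (f x - f y) ^ 2 ≤ wlen w γ * ∑ e ∈ (edgeList γ).toFinset, (f e.1 - f e.2) ^ 2 / w e := by
  obtain ⟨hxy, h1, h2, hmem, hnd⟩ := h
  have hwpos : ∀ e ∈ (edgeList γ).toFinset, 0 < w e := by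
    intro e he; exact hw e (hmem e (List.mem_toFinset.1 he))
  have hfxy : f x - f y = ∑ e ∈ (edgeList γ).toFinset, (f e.1 - f e.2) := by
    rw [List.sum_toFinset _ hnd, telescope_aux f γ x y h1 h2]
  have hwlen : wlen w γ = ∑ e ∈ (edgeList γ).toFinset, w e := by
    rw [List.sum_toFinset _ hnd]; rfl
  set s := (edgeList γ).toFinset
  calc (f x - f y) ^ 2
      = (∑ e ∈ s, Real.sqrt (w e) * ((f e.1 - f e.2) / Real.sqrt (w e))) ^ 2 := by
        rw [hfxy]
        congr 1
        refine Finset.sum_congr rfl fun e he => ?_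
        rw [mul_div_cancel₀ _ (ne_of_gt (Real.sqrt_pos.2 (hwpos e he)))]
    _ ≤ (∑ e ∈ s, Real.sqrt (w e) ^ 2) * ∑ e ∈ s, ((f e.1 - f e.2) / Real.sqrt (w e)) ^ 2 :=
        Finset.sum_mul_sq_le_sq_mul_sq s _ _
    _ = wlen w γ * ∑ e ∈ s, (f e.1 - f e.2) ^ 2 / w e := by
        rw [hwlen]
        congr 1
        · exact Finset.sum_congr rfl fun e he => Real.sq_sqrt (hwpos e he).le
        · refine Finset.sum_congr rfl fun e he => ?_
          rw [div_pow, Real.sq_sqrt (hwpos e he).le]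

lemma path_edge_mem {E : Finset (X × X)} {x y : X} {γ : List X} (h : IsPathIn E x y γ) :
    ∃ e, e ∈ E := by
  obtain ⟨hxy, h1, h2, hmem, -⟩ := h
  match γ with
  | [] => simp at h1
  | [c] =>
      simp only [List.head?_cons, Option.some.injEq] at h1
      simp only [List.getLast?_singleton, Option.some.injEq] at h2
      exact absurd (h1.symm.trans h2) hxy
  | a :: b :: r =>
      exact ⟨(a, b), hmem (a, b) (by rw [edgeList_cons']; exact List.mem_cons_self)⟩

end auxstmt9

set_option maxHeartbeats 1000000 in
theorem stmt9 {X : Type*} [Fintype X] [DecidableEq X]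
    (π : X → ℝ) (hπpos : ∀ x, 0 < π x) (hπsum : ∑ x, π x = 1)
    (P : Matrix X X ℝ) (hProw : ∀ x, ∑ y, P x y = 1) (hPnn : ∀ x y, 0 ≤ P x y)
    (hrev : ∀ x y, π x * P x y = π y * P y x)
    (hirr : ∀ x y : X, Relation.ReflTransGen (fun a b => 0 < P a b) x y)
    (haper : ∃ t : ℕ, ∀ x y, 0 < (P ^ t) x y)
    (E : Finset (X × X)) (hE : ∀ e ∈ E, e.1 ≠ e.2 ∧ 0 < P e.1 e.2)
    (w : X × X → ℝ) (hw : ∀ e ∈ E, 0 < w e)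
    (φ : List X → ℝ) (hφnn : ∀ γ, (∃ x y, IsPathIn E x y γ) → 0 ≤ φ γ)
    (hflow : ∀ x y : X, x ≠ y → flowBetween E φ x y = π x * π y) :
    1 / congestion π P E w φ ≤ specGap P π := by
  classical
  rw [specGap]
  by_cases hne : ∃ f : X → ℝ, (2⁻¹ * ∑ x, ∑ y, (f x - f y) ^ 2 * π x * π y) ≠ 0
  case neg =>
    -- degenerate case: X has at most one point
    rw [congestion]
    push_neg at hne
    have hsub : ∀ x y : X, x = y := by
      intro x y
      by_contra hxy
      have := hne (fun z => if z = x then (1:ℝ) else 0)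
      have hterm : ∀ a b : X, 0 ≤ ((if a = x then (1:ℝ) else 0) - (if b = x then (1:ℝ) else 0)) ^ 2 * π a * π b := by
        intro a b
        exact mul_nonneg (mul_nonneg (sq_nonneg _) (hπpos a).le) (hπpos b).le
      have hpos : (0:ℝ) < ∑ a, ∑ b, ((if a = x then (1:ℝ) else 0) - (if b = x then (1:ℝ) else 0)) ^ 2 * π a * π b := by
        have h1 : (0:ℝ) < ((if x = x then (1:ℝ) else 0) - (if y = x then (1:ℝ) else 0)) ^ 2 * π x * π y := by
          simp only [if_pos rfl, if_neg (fun h => hxy (h ▸ rfl) : ¬ y = x)]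
          norm_num
          exact mul_pos (hπpos x) (hπpos y)
        calc (0:ℝ) < ((if x = x then (1:ℝ) else 0) - (if y = x then (1:ℝ) else 0)) ^ 2 * π x * π y := h1
          _ ≤ ∑ b, ((if x = x then (1:ℝ) else 0) - (if b = x then (1:ℝ) else 0)) ^ 2 * π x * π b :=
              Finset.single_le_sum (fun b _ => hterm x b) (Finset.mem_univ y)
          _ ≤ ∑ a, ∑ b, ((if a = x then (1:ℝ) else 0) - (if b = x then (1:ℝ) else 0)) ^ 2 * π a * π b :=
              Finset.single_le_sum (fun a _ => Finset.sum_nonneg (fun b _ => hterm a b)) (Finset.mem_univ x)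
      linarith [this, hpos]
    have hEempty : ∀ e : X × X, e ∉ E := by
      intro e he
      exact (hE e he).1 (hsub e.1 e.2)
    have hc : (⨆ e, ⨆ _ : e ∈ E,
        (∑' γ : {γ : List X // (∃ x y, IsPathIn E x y γ) ∧ e ∈ edgeList γ}, wlen w γ * φ γ) /
          (π e.1 * P e.1 e.2 * w e)) = 0 := by
      have hinner : ∀ e : X × X, (⨆ _ : e ∈ E,
          (∑' γ : {γ : List X // (∃ x y, IsPathIn E x y γ) ∧ e ∈ edgeList γ}, wlen w γ * φ γ) /
            (π e.1 * P e.1 e.2 * w e)) = 0 := by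
        intro e
        have : IsEmpty (e ∈ E) := ⟨hEempty e⟩
        rw [iSup_of_empty' _, Real.sSup_empty]
      simp only [hinner]
      rcases isEmpty_or_nonempty (X × X) with h | h
      · rw [iSup_of_empty' _, Real.sSup_empty]
      · exact ciSup_const
    rw [hc]
    have hSempty : { r : ℝ | ∃ f : X → ℝ,
        (2⁻¹ * ∑ x, ∑ y, (f x - f y) ^ 2 * π x * π y) ≠ 0 ∧
        r = (2⁻¹ * ∑ x, ∑ y, (f x - f y) ^ 2 * P x y * π x) /
            (2⁻¹ * ∑ x, ∑ y, (f x - f y) ^ 2 * π x * π y) } = ∅ := by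
      ext r
      simp only [Set.mem_setOf_eq, Set.mem_empty_iff_false, iff_false, not_exists]
      intro f hf
      exact absurd (hne f) hf.1
    rw [hSempty, Real.sInf_empty]
    norm_num
  case pos =>
    obtain ⟨f0, hf0⟩ := hne
    refine le_csInf ⟨_, f0, hf0, rfl⟩ ?_
    rintro r ⟨f, hVne, rfl⟩
    -- basic positivity
    have hVnn : (0:ℝ) ≤ ∑ x, ∑ y, (f x - f y) ^ 2 * π x * π y :=
      Finset.sum_nonneg fun x _ => Finset.sum_nonneg fun y _ =>
        mul_nonneg (mul_nonneg (sq_nonneg _) (hπpos x).le) (hπpos y).le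
    have hVpos : (0:ℝ) < ∑ x, ∑ y, (f x - f y) ^ 2 * π x * π y := by
      rcases hVnn.lt_or_eq with h | h
      · exact h
      · exact absurd (by rw [← h, mul_zero]) hVne
    have hEnn : (0:ℝ) ≤ ∑ x, ∑ y, (f x - f y) ^ 2 * P x y * π x :=
      Finset.sum_nonneg fun x _ => Finset.sum_nonneg fun y _ =>
        mul_nonneg (mul_nonneg (sq_nonneg _) (hPnn x y)) (hπpos x).le
    -- two distinct points
    have hxy2 : ∃ x y : X, x ≠ y := by
      by_contra h
      push_neg at h
      apply hVne
      rw [Finset.sum_congr rfl fun x _ => Finset.sum_eq_zero fun y _ => by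
        rw [h x y]; ring]
      simp
    have hX : Nonempty X := ⟨hxy2.choose⟩
    inhabit X
    set Γ : Finset (List X) := (paths_finite E).toFinset with hΓdef
    have hΓmem : ∀ γ : List X, γ ∈ Γ ↔ ∃ x y, IsPathIn E x y γ := by
      intro γ; rw [hΓdef, Set.Finite.mem_toFinset]; rfl
    set key : List X → X × X :=
      fun γ => ((γ.head?).getD default, (γ.getLast?).getD default) with hkeydef
    have hkey : ∀ {x y : X} {γ : List X}, IsPathIn E x y γ → key γ = (x, y) := by
      intro x y γ h
      obtain ⟨-, h1, h2, -, -⟩ := h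
      rw [hkeydef]; simp [h1, h2]
    -- flow as finite sum over fibers
    have hfin_xy : ∀ x y : X, {γ : List X | IsPathIn E x y γ}.Finite := fun x y =>
      (paths_finite E).subset fun γ h => ⟨x, y, h⟩
    have hfilter : ∀ x y : X,
        Γ.filter (fun γ => key γ = (x, y)) = (hfin_xy x y).toFinset := by
      intro x y
      ext γ
      rw [Finset.mem_filter, hΓmem, Set.Finite.mem_toFinset, Set.mem_setOf_eq]
      constructor
      · rintro ⟨⟨x', y', hγ⟩, hk⟩
        rw [hkey hγ, Prod.mk.injEq] at hk
        obtain ⟨rfl, rfl⟩ := hk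
        exact hγ
      · intro hγ
        exact ⟨⟨x, y, hγ⟩, hkey hγ⟩
    have hflowsum : ∀ x y : X, (∑ γ ∈ Γ.filter (fun γ => key γ = (x, y)), φ γ)
        = if x = y then 0 else π x * π y := by
      intro x y
      rw [hfilter]
      by_cases hxy : x = y
      · subst hxy
        rw [if_pos rfl]
        apply Finset.sum_eq_zero
        intro γ hγ
        rw [Set.Finite.mem_toFinset] at hγ
        exact absurd rfl hγ.1
      · rw [if_neg hxy, ← hflow x y hxy, flowBetween, tsum_of_finite (hfin_xy x y) φ]
    -- variance as sum over paths
    have hVar : ∑ x, ∑ y, (f x - f y) ^ 2 * π x * π y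
        = ∑ γ ∈ Γ, (f (key γ).1 - f (key γ).2) ^ 2 * φ γ := by
      calc ∑ x, ∑ y, (f x - f y) ^ 2 * π x * π y
          = ∑ x, ∑ y, ∑ γ ∈ Γ.filter (fun γ => key γ = (x, y)), (f x - f y) ^ 2 * φ γ := by
            refine Finset.sum_congr rfl fun x _ => Finset.sum_congr rfl fun y _ => ?_
            rw [← Finset.mul_sum, hflowsum]
            by_cases hxy : x = y
            · subst hxy; simp
            · rw [if_neg hxy]; ring
        _ = ∑ x, ∑ y, ∑ γ ∈ Γ.filter (fun γ => key γ = (x, y)),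
              (f (key γ).1 - f (key γ).2) ^ 2 * φ γ := by
            refine Finset.sum_congr rfl fun x _ => Finset.sum_congr rfl fun y _ =>
              Finset.sum_congr rfl fun γ hγ => ?_
            rw [(Finset.mem_filter.1 hγ).2]
        _ = ∑ p : X × X, ∑ γ ∈ Γ.filter (fun γ => key γ = p),
              (f (key γ).1 - f (key γ).2) ^ 2 * φ γ := by
            rw [Fintype.sum_prod_type]
        _ = ∑ γ ∈ Γ, (f (key γ).1 - f (key γ).2) ^ 2 * φ γ :=
            Finset.sum_fiberwise Γ key _
    -- tsum of congestion numerator as finite sum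
    have hTfin : ∀ e : X × X,
        {γ : List X | (∃ x y, IsPathIn E x y γ) ∧ e ∈ edgeList γ}.Finite :=
      fun e => (paths_finite E).subset fun γ h => h.1
    have hT : ∀ e : X × X,
        (∑' γ : {γ : List X // (∃ x y, IsPathIn E x y γ) ∧ e ∈ edgeList γ},
          wlen w γ * φ γ)
        = ∑ γ ∈ Γ.filter (fun γ => e ∈ edgeList γ), wlen w γ * φ γ := by
      intro e
      refine Eq.trans (tsum_of_finite (hTfin e) fun γ => wlen w γ * φ γ) ?_
      apply Finset.sum_congr _ fun γ _ => rfl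
      ext γ
      rw [Set.Finite.mem_toFinset, Set.mem_setOf_eq, Finset.mem_filter, hΓmem]
    have hwlen_nn : ∀ γ ∈ Γ, 0 ≤ wlen w γ := by
      intro γ hγ
      obtain ⟨x, y, hγ'⟩ := (hΓmem γ).1 hγ
      apply List.sum_nonneg
      intro a ha
      obtain ⟨e, he, rfl⟩ := List.mem_map.1 ha
      exact (hw e (hγ'.2.2.2.1 e he)).le
    have hφΓ : ∀ γ ∈ Γ, 0 ≤ φ γ := fun γ hγ => hφnn γ ((hΓmem γ).1 hγ)
    have hTnn : ∀ e : X × X,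
        0 ≤ ∑ γ ∈ Γ.filter (fun γ => e ∈ edgeList γ), wlen w γ * φ γ := by
      intro e
      refine Finset.sum_nonneg fun γ hγ => ?_
      have hγ' := (Finset.mem_filter.1 hγ).1
      exact mul_nonneg (hwlen_nn γ hγ') (hφΓ γ hγ')
    have hQpos : ∀ e ∈ E, 0 < π e.1 * P e.1 e.2 * w e := fun e he =>
      mul_pos (mul_pos (hπpos e.1) (hE e he).2) (hw e he)
    -- congestion bounds below
    have hAc : ∀ e ∈ E,
        (∑ γ ∈ Γ.filter (fun γ => e ∈ edgeList γ), wlen w γ * φ γ)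
          / (π e.1 * P e.1 e.2 * w e) ≤ congestion π P E w φ := by
      intro e he
      rw [← hT e, congestion]
      have hb : BddAbove (Set.range fun e : X × X => ⨆ _ : e ∈ E,
          (∑' γ : {γ : List X // (∃ x y, IsPathIn E x y γ) ∧ e ∈ edgeList γ},
            wlen w γ * φ γ) / (π e.1 * P e.1 e.2 * w e)) :=
        Set.Finite.bddAbove (Set.finite_range _)
      refine le_trans ?_ (le_ciSup hb e)
      rw [ciSup_pos he]
    have hEne : E.Nonempty := by
      obtain ⟨x, y, hxy⟩ := hxy2
      by_contra h
      rw [Finset.not_nonempty_iff_eq_empty] at h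
      have h0 : flowBetween E φ x y = 0 := by
        rw [flowBetween]
        have : IsEmpty {γ : List X // IsPathIn E x y γ} := by
          constructor
          rintro ⟨γ, hγ⟩
          obtain ⟨e, he⟩ := path_edge_mem hγ
          rw [h] at he
          exact absurd he (Finset.notMem_empty _)
        exact tsum_empty
      rw [hflow x y hxy] at h0
      exact absurd h0 (ne_of_gt (mul_pos (hπpos x) (hπpos y)))
    have hA0 : 0 ≤ congestion π P E w φ := by
      obtain ⟨e, he⟩ := hEne
      exact le_trans (div_nonneg (hTnn e) (hQpos e he).le) (hAc e he)
    -- the key chain of inequalities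
    have keyineq : ∑ x, ∑ y, (f x - f y) ^ 2 * π x * π y
        ≤ congestion π P E w φ * ∑ x, ∑ y, (f x - f y) ^ 2 * P x y * π x := by
      calc ∑ x, ∑ y, (f x - f y) ^ 2 * π x * π y
          = ∑ γ ∈ Γ, (f (key γ).1 - f (key γ).2) ^ 2 * φ γ := hVar
        _ ≤ ∑ γ ∈ Γ, (wlen w γ * ∑ e ∈ (edgeList γ).toFinset,
              (f e.1 - f e.2) ^ 2 / w e) * φ γ := by
            refine Finset.sum_le_sum fun γ hγ => ?_
            obtain ⟨x, y, hγ'⟩ := (hΓmem γ).1 hγ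
            rw [hkey hγ']
            exact mul_le_mul_of_nonneg_right (list_CS hw hγ' f) (hφΓ γ hγ)
        _ = ∑ γ ∈ Γ, ∑ e ∈ (edgeList γ).toFinset,
              ((f e.1 - f e.2) ^ 2 / w e) * (wlen w γ * φ γ) := by
            refine Finset.sum_congr rfl fun γ hγ => ?_
            rw [Finset.mul_sum, Finset.sum_mul]
            exact Finset.sum_congr rfl fun e _ => by ring
        _ = ∑ γ ∈ Γ, ∑ e ∈ E, (if e ∈ edgeList γ then
              ((f e.1 - f e.2) ^ 2 / w e) * (wlen w γ * φ γ) else 0) := by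
            refine Finset.sum_congr rfl fun γ hγ => ?_
            obtain ⟨x, y, hγ'⟩ := (hΓmem γ).1 hγ
            have hsub : (edgeList γ).toFinset ⊆ E :=
              fun e he => hγ'.2.2.2.1 e (List.mem_toFinset.1 he)
            rw [← Finset.sum_subset hsub
              (fun e _ he => if_neg fun hc => he (List.mem_toFinset.2 hc))]
            exact Finset.sum_congr rfl fun e he =>
              (if_pos (List.mem_toFinset.1 he)).symm
        _ = ∑ e ∈ E, ((f e.1 - f e.2) ^ 2 / w e)
              * ∑ γ ∈ Γ.filter (fun γ => e ∈ edgeList γ), wlen w γ * φ γ := by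
            rw [Finset.sum_comm]
            refine Finset.sum_congr rfl fun e he => ?_
            rw [Finset.mul_sum, Finset.sum_filter]
        _ ≤ ∑ e ∈ E, ((f e.1 - f e.2) ^ 2 / w e)
              * (congestion π P E w φ * (π e.1 * P e.1 e.2 * w e)) := by
            refine Finset.sum_le_sum fun e he => ?_
            refine mul_le_mul_of_nonneg_left ?_ (div_nonneg (sq_nonneg _) (hw e he).le)
            exact (div_le_iff₀ (hQpos e he)).1 (hAc e he)
        _ = congestion π P E w φ * ∑ e ∈ E,
              (f e.1 - f e.2) ^ 2 * (P e.1 e.2 * π e.1) := by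
            rw [Finset.mul_sum]
            refine Finset.sum_congr rfl fun e he => ?_
            have hwne : w e ≠ 0 := (hw e he).ne'
            field_simp
        _ ≤ congestion π P E w φ * ∑ x, ∑ y, (f x - f y) ^ 2 * P x y * π x := by
            refine mul_le_mul_of_nonneg_left ?_ hA0
            have h1 : ∑ x, ∑ y, (f x - f y) ^ 2 * P x y * π x
                = ∑ e : X × X, (f e.1 - f e.2) ^ 2 * (P e.1 e.2 * π e.1) := by
              rw [Fintype.sum_prod_type]
              exact Finset.sum_congr rfl fun x _ =>
                Finset.sum_congr rfl fun y _ => by ring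
            rw [h1]
            exact Finset.sum_le_sum_of_subset_of_nonneg (Finset.subset_univ E)
              fun e _ _ => mul_nonneg (sq_nonneg _)
                (mul_nonneg (hPnn e.1 e.2) (hπpos e.1).le)
    -- conclude
    have hV2pos : (0:ℝ) < 2⁻¹ * ∑ x, ∑ y, (f x - f y) ^ 2 * π x * π y := by
      positivity
    rcases hA0.lt_or_eq with hA | hA
    · rw [div_le_div_iff₀ hA hV2pos]
      have : 2⁻¹ * (∑ x, ∑ y, (f x - f y) ^ 2 * π x * π y)
          ≤ 2⁻¹ * (congestion π P E w φ * ∑ x, ∑ y, (f x - f y) ^ 2 * P x y * π x) := by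
        linarith [keyineq]
      calc 1 * (2⁻¹ * ∑ x, ∑ y, (f x - f y) ^ 2 * π x * π y)
          = 2⁻¹ * ∑ x, ∑ y, (f x - f y) ^ 2 * π x * π y := one_mul _
        _ ≤ 2⁻¹ * (congestion π P E w φ * ∑ x, ∑ y, (f x - f y) ^ 2 * P x y * π x) := this
        _ = (2⁻¹ * ∑ x, ∑ y, (f x - f y) ^ 2 * P x y * π x) * congestion π P E w φ := by
            ring
    · rw [← hA, div_zero]
      exact div_nonneg (by positivity) hV2pos.le
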